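/- Given M symmetric positive definite and F ≠ 0, the unique vector v* ∈ R^d satisfying v*' M v* = v' M v, v*' F = -v' F, and v* - v ∈ span(M^{-1} F) is v* = R(v) = v - 2 (v'F)/(F' M^{-1} F) M^{-1} F (assuming v' F ≠ 0; if v'F = 0 then v* = v). -/

import Mathlib

open Matrix

/-- `R(v)` is the unique vector on the line `v + ℝ·M⁻¹F` that conserves the kinetic energy
and reverses the component of the velocity along `F`; if `v'F = 0` then `R(v) = v`. -/
theorem reflection_unique {d : ℕ}
    (M : Matrix (Fin d) (Fin d) ℝ) (hM : M.PosDef)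
    (F : Fin d → ℝ) (hF : F ≠ 0) (v : Fin d → ℝ) :
    (v ⬝ᵥ F ≠ 0 → ∀ w : Fin d → ℝ,
      (w ⬝ᵥ (M *ᵥ w) = v ⬝ᵥ (M *ᵥ v) ∧ w ⬝ᵥ F = -(v ⬝ᵥ F) ∧
        ∃ c : ℝ, w - v = c • (M⁻¹ *ᵥ F))
      ↔ w = v - (2 * (v ⬝ᵥ F) / (F ⬝ᵥ (M⁻¹ *ᵥ F))) • (M⁻¹ *ᵥ F)) ∧
    (v ⬝ᵥ F = 0 → v - (2 * (v ⬝ᵥ F) / (F ⬝ᵥ (M⁻¹ *ᵥ F))) • (M⁻¹ *ᵥ F) = v) := by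
  have hinv : (M⁻¹).PosDef := hM.inv
  set u : Fin d → ℝ := M⁻¹ *ᵥ F with hu
  have hb : 0 < F ⬝ᵥ u := by
    have := hinv.dotProduct_mulVec_pos hF
    simpa [hu] using this
  have hb' : F ⬝ᵥ u ≠ 0 := ne_of_gt hb
  have hMu : M *ᵥ u = F := by
    rw [hu, Matrix.mulVec_mulVec, Matrix.mul_nonsing_inv _ (isUnit_iff_ne_zero.mpr hM.det_pos.ne'),
      Matrix.one_mulVec]
  have huF : u ⬝ᵥ F = F ⬝ᵥ u := dotProduct_comm _ _
  have hsym : u ⬝ᵥ (M *ᵥ v) = v ⬝ᵥ F := by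
    rw [Matrix.dotProduct_mulVec, ← Matrix.mulVec_transpose]
    have ht : Mᵀ = M := hM.1
    rw [ht, hMu, dotProduct_comm]
  have huMu : u ⬝ᵥ (M *ᵥ u) = F ⬝ᵥ u := by rw [hMu, dotProduct_comm]
  have hvMu : v ⬝ᵥ (M *ᵥ u) = v ⬝ᵥ F := by rw [hMu]
  constructor
  · intro hvF w
    constructor
    · rintro ⟨hE, hRev, c, hc⟩
      have hw : w = v + c • u := by
        have h := eq_add_of_sub_eq hc
        rw [h, add_comm]
      have hRev' : v ⬝ᵥ F + c * (F ⬝ᵥ u) = -(v ⬝ᵥ F) := by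
        rw [hw] at hRev
        simpa [add_dotProduct, smul_dotProduct, huF, smul_eq_mul] using hRev
      have hcval : c = -(2 * (v ⬝ᵥ F) / (F ⬝ᵥ u)) := by
        field_simp
        linarith
      rw [hw, hcval, neg_smul, ← sub_eq_add_neg]
    · rintro rfl
      set k : ℝ := 2 * (v ⬝ᵥ F) / (F ⬝ᵥ u) with hk
      have hkb : k * (F ⬝ᵥ u) = 2 * (v ⬝ᵥ F) := by
        rw [hk]; field_simp
      refine ⟨?_, ?_, -k, by rw [sub_sub_cancel_left, neg_smul]⟩
      · simp only [sub_dotProduct, dotProduct_sub, Matrix.mulVec_sub,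
          Matrix.mulVec_smul, smul_dotProduct, dotProduct_smul,
          smul_eq_mul, hsym, huMu, hvMu]
        rw [hk]
        field_simp
        ring
      · simp only [sub_dotProduct, smul_dotProduct, smul_eq_mul, huF]
        rw [hkb]; ring
  · intro h0
    rw [h0]
    simp
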